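/- (Trivial LLD solution for small γ.) Let X be a real n×p matrix and suppose 0 < γ < 1/√n. If (P⋆, C⋆) is an optimal point of the low-leverage decomposition (LLD) program for X with parameter γ, then P⋆ = 0. -/

import Mathlib

open Matrix
open scoped BigOperators

/-- The Euclidean (ℓ2) norm of a vector. -/
noncomputable def l2norm {p : ℕ} (u : Fin p → ℝ) : ℝ := Real.sqrt (∑ j, u j ^ 2)

/-- The trace inner product ⟨A, B⟩ = trace(Aᵀ B) on real matrices. -/
def tinner {n p : ℕ} (A B : Matrix (Fin n) (Fin p) ℝ) : ℝ := ∑ i, ∑ j, A i j * B i j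

/-- The spectral norm (ℓ2 → ℓ2 operator norm) of a matrix. -/
noncomputable def norm2to2 {n p : ℕ} (Q : Matrix (Fin n) (Fin p) ℝ) : ℝ :=
  sSup {t : ℝ | ∃ u : Fin p → ℝ, l2norm u ≤ 1 ∧ t = l2norm (Q.mulVec u)}

/-- The nuclear norm, defined as the dual of the spectral norm with respect to
the trace inner product. -/
noncomputable def nuclearNorm {n p : ℕ} (P : Matrix (Fin n) (Fin p) ℝ) : ℝ :=
  sSup {t : ℝ | ∃ A : Matrix (Fin n) (Fin p) ℝ, norm2to2 A ≤ 1 ∧ t = tinner P A}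

/-- The row-sum norm ‖C‖_{2,1}: the sum of the Euclidean norms of the rows. -/
noncomputable def rowSumNorm {n p : ℕ} (C : Matrix (Fin n) (Fin p) ℝ) : ℝ :=
  ∑ i, l2norm (C i)


lemma l2norm_eq_norm {p : ℕ} (u : Fin p → ℝ) :
    l2norm u = ‖(show EuclideanSpace ℝ (Fin p) from WithLp.toLp 2 u)‖ := by
  rw [EuclideanSpace.norm_eq]
  unfold l2norm
  congr 1
  exact Finset.sum_congr rfl fun j _ => by rw [Real.norm_eq_abs, sq_abs]

lemma l2norm_nonneg {p : ℕ} (u : Fin p → ℝ) : 0 ≤ l2norm u := Real.sqrt_nonneg _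

lemma l2norm_zero {p : ℕ} : l2norm (0 : Fin p → ℝ) = 0 := by simp [l2norm]

lemma l2norm_sq {p : ℕ} (u : Fin p → ℝ) : l2norm u ^ 2 = ∑ j, u j ^ 2 :=
  Real.sq_sqrt (Finset.sum_nonneg fun j _ => sq_nonneg _)

lemma l2norm_cs {p : ℕ} (u v : Fin p → ℝ) : |∑ j, u j * v j| ≤ l2norm u * l2norm v := by
  rw [l2norm_eq_norm, l2norm_eq_norm]
  have := abs_real_inner_le_norm (show EuclideanSpace ℝ (Fin p) from WithLp.toLp 2 u)
    (show EuclideanSpace ℝ (Fin p) from WithLp.toLp 2 v)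
  simpa [PiLp.inner_apply, RCLike.inner_apply, mul_comm] using this

lemma l2norm_add_le {p : ℕ} (u v : Fin p → ℝ) : l2norm (u + v) ≤ l2norm u + l2norm v := by
  rw [l2norm_eq_norm, l2norm_eq_norm, l2norm_eq_norm]
  exact norm_add_le (WithLp.toLp 2 u : EuclideanSpace ℝ (Fin p)) (WithLp.toLp 2 v)

lemma l2norm_smul {p : ℕ} (c : ℝ) (u : Fin p → ℝ) : l2norm (c • u) = |c| * l2norm u := by
  rw [l2norm_eq_norm, l2norm_eq_norm]
  exact norm_smul c (WithLp.toLp 2 u : EuclideanSpace ℝ (Fin p))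

lemma abs_le_l2norm {p : ℕ} (u : Fin p → ℝ) (j : Fin p) : |u j| ≤ l2norm u := by
  rw [← Real.sqrt_sq_eq_abs]
  exact Real.sqrt_le_sqrt (Finset.single_le_sum (fun j _ => sq_nonneg (u j)) (Finset.mem_univ j))

/-- Frobenius norm as the l2 norm of row norms. -/
noncomputable def frob {n p : ℕ} (P : Matrix (Fin n) (Fin p) ℝ) : ℝ :=
  l2norm (fun i => l2norm (P i))

lemma frob_nonneg {n p : ℕ} (P : Matrix (Fin n) (Fin p) ℝ) : 0 ≤ frob P :=
  l2norm_nonneg _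

lemma frob_sq {n p : ℕ} (P : Matrix (Fin n) (Fin p) ℝ) :
    frob P ^ 2 = ∑ i, ∑ j, P i j ^ 2 := by
  rw [frob, l2norm_sq]
  exact Finset.sum_congr rfl fun i _ => l2norm_sq (P i)


lemma frob_sq' {n p : ℕ} (P : Matrix (Fin n) (Fin p) ℝ) :
    frob P ^ 2 = ∑ i, l2norm (P i) ^ 2 := l2norm_sq _

lemma sq_le_of_abs_le {a b : ℝ} (h : |a| ≤ b) : a ^ 2 ≤ b ^ 2 := by
  rw [← sq_abs]
  exact pow_le_pow_left₀ (abs_nonneg a) h 2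

lemma le_of_sq_le_sq' {a b : ℝ} (ha : 0 ≤ a) (hb : 0 ≤ b) (h : a ^ 2 ≤ b ^ 2) : a ≤ b := by
  nlinarith

lemma mulVec_l2norm_le {n p : ℕ} (Q : Matrix (Fin n) (Fin p) ℝ) (u : Fin p → ℝ) :
    l2norm (Q.mulVec u) ≤ frob Q * l2norm u := by
  refine le_of_sq_le_sq' (l2norm_nonneg _)
    (mul_nonneg (frob_nonneg Q) (l2norm_nonneg u)) ?_
  rw [l2norm_sq, mul_pow, frob_sq', Finset.sum_mul]
  refine Finset.sum_le_sum fun i _ => ?_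
  rw [← mul_pow]
  exact sq_le_of_abs_le (l2norm_cs (Q i) u)

lemma norm2to2_bddAbove {n p : ℕ} (Q : Matrix (Fin n) (Fin p) ℝ) :
    BddAbove {t : ℝ | ∃ u : Fin p → ℝ, l2norm u ≤ 1 ∧ t = l2norm (Q.mulVec u)} := by
  refine ⟨frob Q, fun t ht => ?_⟩
  obtain ⟨u, hu, rfl⟩ := ht
  calc l2norm (Q.mulVec u) ≤ frob Q * l2norm u := mulVec_l2norm_le Q u
    _ ≤ frob Q * 1 := mul_le_mul_of_nonneg_left hu (frob_nonneg Q)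
    _ = frob Q := mul_one _

lemma zero_mem_norm2to2_set {n p : ℕ} (Q : Matrix (Fin n) (Fin p) ℝ) :
    (0 : ℝ) ∈ {t : ℝ | ∃ u : Fin p → ℝ, l2norm u ≤ 1 ∧ t = l2norm (Q.mulVec u)} := by
  refine ⟨0, by rw [l2norm_zero]; norm_num, ?_⟩
  rw [Matrix.mulVec_zero, l2norm_zero]

lemma norm2to2_nonneg {n p : ℕ} (Q : Matrix (Fin n) (Fin p) ℝ) : 0 ≤ norm2to2 Q :=
  le_csSup (norm2to2_bddAbove Q) (zero_mem_norm2to2_set Q)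

lemma row_le_norm2to2 {n p : ℕ} (A : Matrix (Fin n) (Fin p) ℝ) (i : Fin n) :
    l2norm (A i) ≤ norm2to2 A := by
  rcases eq_or_lt_of_le (l2norm_nonneg (A i)) with h | h
  · rw [← h]; exact norm2to2_nonneg A
  · set c := (l2norm (A i))⁻¹ with hc
    have hcpos : 0 < c := inv_pos.mpr h
    set u := c • (A i) with hu
    have hu1 : l2norm u = 1 := by
      rw [hu, l2norm_smul, abs_of_pos hcpos, hc, inv_mul_cancel₀ (ne_of_gt h)]
    have hmem : l2norm (A.mulVec u) ∈
        {t : ℝ | ∃ u : Fin p → ℝ, l2norm u ≤ 1 ∧ t = l2norm (A.mulVec u)} :=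
      ⟨u, le_of_eq hu1, rfl⟩
    have hAi : (A.mulVec u) i = l2norm (A i) := by
      rw [hu]
      show ∑ j, A i j * (c * A i j) = l2norm (A i)
      have : ∑ j, A i j * (c * A i j) = c * ∑ j, A i j ^ 2 := by
        rw [Finset.mul_sum]; exact Finset.sum_congr rfl fun j _ => by ring
      rw [this, ← l2norm_sq, hc, sq]
      field_simp
    have : l2norm (A i) ≤ l2norm (A.mulVec u) := by
      rw [← hAi]
      exact le_trans (le_abs_self _) (abs_le_l2norm _ i)
    exact le_trans this (le_csSup (norm2to2_bddAbove A) hmem)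

lemma rowSumNorm_nonneg {n p : ℕ} (C : Matrix (Fin n) (Fin p) ℝ) : 0 ≤ rowSumNorm C :=
  Finset.sum_nonneg fun i _ => l2norm_nonneg _

lemma nuclear_bddAbove {n p : ℕ} (P : Matrix (Fin n) (Fin p) ℝ) :
    BddAbove {t : ℝ | ∃ A : Matrix (Fin n) (Fin p) ℝ, norm2to2 A ≤ 1 ∧ t = tinner P A} := by
  refine ⟨rowSumNorm P, fun t ht => ?_⟩
  obtain ⟨A, hA, rfl⟩ := ht
  calc tinner P A ≤ ∑ i, l2norm (P i) * l2norm (A i) := by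
        refine Finset.sum_le_sum fun i _ => ?_
        exact le_trans (le_abs_self _) (l2norm_cs (P i) (A i))
    _ ≤ ∑ i, l2norm (P i) * 1 := by
        refine Finset.sum_le_sum fun i _ => ?_
        exact mul_le_mul_of_nonneg_left (le_trans (row_le_norm2to2 A i) hA) (l2norm_nonneg _)
    _ = rowSumNorm P := by simp [rowSumNorm]

lemma norm2to2_zero {n p : ℕ} : norm2to2 (0 : Matrix (Fin n) (Fin p) ℝ) = 0 := by
  unfold norm2to2
  have : {t : ℝ | ∃ u : Fin p → ℝ, l2norm u ≤ 1 ∧ t = l2norm ((0 : Matrix (Fin n) (Fin p) ℝ).mulVec u)}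
      = {(0 : ℝ)} := by
    ext t
    constructor
    · rintro ⟨u, hu, rfl⟩
      simp [Matrix.zero_mulVec, l2norm_zero]
    · rintro rfl
      exact ⟨0, by rw [l2norm_zero]; norm_num, by rw [Matrix.mulVec_zero, l2norm_zero]⟩
  rw [this, csSup_singleton]

lemma nuclearNorm_zero {n p : ℕ} : nuclearNorm (0 : Matrix (Fin n) (Fin p) ℝ) = 0 := by
  unfold nuclearNorm
  have : {t : ℝ | ∃ A : Matrix (Fin n) (Fin p) ℝ, norm2to2 A ≤ 1 ∧ t = tinner 0 A}
      = {(0 : ℝ)} := by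
    ext t
    constructor
    · rintro ⟨A, hA, rfl⟩
      simp [tinner]
    · rintro rfl
      exact ⟨0, by rw [norm2to2_zero]; norm_num, by simp [tinner]⟩
  rw [this, csSup_singleton]

lemma frob_le_nuclear {n p : ℕ} (P : Matrix (Fin n) (Fin p) ℝ) :
    frob P ≤ nuclearNorm P := by
  rcases eq_or_lt_of_le (frob_nonneg P) with h | h
  · rw [← h]
    unfold nuclearNorm
    refine le_csSup (nuclear_bddAbove P) ⟨0, by rw [norm2to2_zero]; norm_num, by simp [tinner]⟩
  · set c := (frob P)⁻¹ with hc
    have hcpos : 0 < c := inv_pos.mpr h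
    set A := c • P with hA
    have hAn : norm2to2 A ≤ 1 := by
      refine csSup_le ⟨0, 0, by rw [l2norm_zero]; norm_num,
        by rw [Matrix.mulVec_zero, l2norm_zero]⟩ ?_
      rintro t ⟨u, hu, rfl⟩
      have : A.mulVec u = c • (P.mulVec u) := by
        rw [hA, Matrix.smul_mulVec]
      rw [this, l2norm_smul, abs_of_pos hcpos]
      calc c * l2norm (P.mulVec u) ≤ c * (frob P * l2norm u) :=
            mul_le_mul_of_nonneg_left (mulVec_l2norm_le P u) (le_of_lt hcpos)
        _ ≤ c * (frob P * 1) := by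
            refine mul_le_mul_of_nonneg_left ?_ (le_of_lt hcpos)
            exact mul_le_mul_of_nonneg_left hu (frob_nonneg P)
        _ = 1 := by rw [mul_one, hc, inv_mul_cancel₀ (ne_of_gt h)]
    have htin : tinner P A = frob P := by
      rw [hA]
      have : tinner P (c • P) = c * ∑ i, ∑ j, P i j ^ 2 := by
        unfold tinner
        rw [Finset.mul_sum]
        refine Finset.sum_congr rfl fun i _ => ?_
        rw [Finset.mul_sum]
        refine Finset.sum_congr rfl fun j _ => ?_
        show P i j * (c * P i j) = c * P i j ^ 2
        ring
      rw [this, ← frob_sq, hc, sq]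
      field_simp
    rw [← htin]
    exact le_csSup (nuclear_bddAbove P) ⟨A, hAn, rfl⟩


lemma rowSumNorm_le_sqrt_frob {n p : ℕ} (P : Matrix (Fin n) (Fin p) ℝ) :
    rowSumNorm P ≤ Real.sqrt n * frob P := by
  have h2 : l2norm (fun _ : Fin n => (1 : ℝ)) = Real.sqrt n := by
    unfold l2norm
    simp
  have := l2norm_cs (fun _ : Fin n => (1 : ℝ)) (fun i => l2norm (P i))
  rw [h2] at this
  calc rowSumNorm P = ∑ i, (fun _ : Fin n => (1:ℝ)) i * (fun i => l2norm (P i)) i := by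
        simp [rowSumNorm]
    _ ≤ |∑ i, (fun _ : Fin n => (1:ℝ)) i * (fun i => l2norm (P i)) i| := le_abs_self _
    _ ≤ Real.sqrt n * frob P := this

theorem lld_trivial_for_small_gamma {n p : ℕ} (X P C : Matrix (Fin n) (Fin p) ℝ)
    (γ : ℝ) (hγ0 : 0 < γ) (hγ : γ < 1 / Real.sqrt n) (hPC : P + C = X)
    (hopt : ∀ P' C' : Matrix (Fin n) (Fin p) ℝ, P' + C' = X →
      nuclearNorm P + γ * rowSumNorm C ≤ nuclearNorm P' + γ * rowSumNorm C') :
    P = 0 := by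
  -- √n > 0 (else 1/√n = 0 contradicts 0 < γ < 1/√n)
  have hs : 0 < Real.sqrt n := by
    rcases (Real.sqrt_nonneg (n : ℝ)).lt_or_eq with h | h
    · exact h
    · exfalso; rw [← h] at hγ; simp at hγ; linarith
  have hγs : γ * Real.sqrt n < 1 := by
    rw [div_eq_inv_mul, mul_one] at hγ
    calc γ * Real.sqrt n < (Real.sqrt n)⁻¹ * Real.sqrt n :=
          mul_lt_mul_of_pos_right hγ hs
      _ = 1 := inv_mul_cancel₀ (ne_of_gt hs)
  -- compare with (0, X)
  have h1 : nuclearNorm P + γ * rowSumNorm C ≤ γ * rowSumNorm X := by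
    have := hopt 0 X (by simp)
    rwa [nuclearNorm_zero, zero_add] at this
  -- triangle: rowSumNorm X ≤ rowSumNorm P + rowSumNorm C
  have h2 : rowSumNorm X ≤ rowSumNorm P + rowSumNorm C := by
    rw [← hPC, rowSumNorm, rowSumNorm, rowSumNorm, ← Finset.sum_add_distrib]
    exact Finset.sum_le_sum fun i _ => l2norm_add_le (P i) (C i)
  have h3 : nuclearNorm P ≤ γ * rowSumNorm P := by nlinarith
  have h4 : frob P ≤ γ * Real.sqrt n * frob P := by
    calc frob P ≤ nuclearNorm P := frob_le_nuclear P
      _ ≤ γ * rowSumNorm P := h3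
      _ ≤ γ * (Real.sqrt n * frob P) :=
          mul_le_mul_of_nonneg_left (rowSumNorm_le_sqrt_frob P) (le_of_lt hγ0)
      _ = γ * Real.sqrt n * frob P := by ring
  have hf0 : frob P = 0 := by nlinarith [frob_nonneg P]
  have hsum : ∑ i, ∑ j, P i j ^ 2 = 0 := by
    rw [← frob_sq, hf0]; norm_num
  ext i j
  have h5 : ∀ i ∈ Finset.univ, (0:ℝ) ≤ ∑ j, P i j ^ 2 :=
    fun i _ => Finset.sum_nonneg fun j _ => sq_nonneg _
  have h6 := (Finset.sum_eq_zero_iff_of_nonneg h5).mp hsum i (Finset.mem_univ i)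
  have h7 := (Finset.sum_eq_zero_iff_of_nonneg (fun j _ => sq_nonneg (P i j))).mp h6 j
    (Finset.mem_univ j)
  simpa using pow_eq_zero_iff two_ne_zero |>.mp h7
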